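/- For the exponential likelihood family p_θ(x) = θ·e^{−θx} on x ∈ ℝ≥0 with parameter θ > 0: (i) the absolute log-ratio distance satisfies d(p_θ(x), p_θ(y)) = θ·|x − y| for all x, y ≥ 0; (ii) consequently, for every L > 0 the set Θ_L = {θ > 0 : d(p_θ(x), p_θ(y)) ≤ L·|x − y| for all x, y ≥ 0} contains (0, L], and under the exponential prior θ ∼ Exp(λ) with density λe^{−λθ} on θ > 0, β(Θ_L) ≥ 1 − e^{−λL} for all L ≥ 0; i.e., Assumption 2 holds with c = λ and metric ρ(x,y) = |x − y|. -/

import Mathlib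

open MeasureTheory

/-- The absolute log-ratio distance on `ℝ≥0` (represented as nonnegative reals). -/
noncomputable def lrdist (a b : ℝ) : ℝ :=
  if a = 0 ∧ b = 0 then 0 else |Real.log (a / b)|

/-- The exponential likelihood density `p_θ(x) = θ·e^{−θx}` on `x ≥ 0`. -/
noncomputable def expDensity (θ x : ℝ) : ℝ := θ * Real.exp (-(θ * x))

/-- The exponential prior `Exp(λ)`: density `λ·e^{−λθ}` on `θ > 0`. -/
noncomputable def expPrior (lam : ℝ) : Measure ℝ :=
  volume.withDensity fun θ =>
    if 0 < θ then ENNReal.ofReal (lam * Real.exp (-(lam * θ))) else 0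

lemma lrdist_expDensity (θ : ℝ) (hθ : 0 < θ) (x y : ℝ) :
    lrdist (expDensity θ x) (expDensity θ y) = θ * |x - y| := by
  have hθ' : θ ≠ 0 := ne_of_gt hθ
  have hne : ¬(expDensity θ x = 0 ∧ expDensity θ y = 0) := by
    rintro ⟨h, -⟩
    exact (mul_ne_zero hθ' (Real.exp_ne_zero _)) h
  rw [lrdist, if_neg hne, expDensity, expDensity,
    mul_div_mul_left _ _ hθ', ← Real.exp_sub, Real.log_exp]
  have : -(θ * x) - -(θ * y) = θ * (y - x) := by ring
  rw [this, abs_mul, abs_of_pos hθ, abs_sub_comm]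

lemma exp_integral_Ioc (lam : ℝ) (L : ℝ) (hL : 0 ≤ L) :
    ∫ θ in Set.Ioc (0:ℝ) L, lam * Real.exp (-(lam * θ)) = 1 - Real.exp (-(lam * L)) := by
  rw [← intervalIntegral.integral_of_le hL]
  have h : ∀ θ ∈ Set.uIcc (0:ℝ) L,
      HasDerivAt (fun t => -Real.exp (-(lam * t))) (lam * Real.exp (-(lam * θ))) θ := by
    intro θ _
    have h1 : HasDerivAt (fun t : ℝ => -(lam * t)) (-lam) θ := by
      exact ((hasDerivAt_id θ).const_mul lam).neg.congr_deriv (by ring)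
    have h2 := (Real.hasDerivAt_exp (-(lam * θ))).comp θ h1
    have h3 := h2.neg
    exact h3.congr_deriv (by ring)
  have hc : IntervalIntegrable (fun θ => lam * Real.exp (-(lam * θ))) volume 0 L :=
    (by continuity : Continuous fun θ : ℝ => lam * Real.exp (-(lam * θ))).intervalIntegrable 0 L
  rw [intervalIntegral.integral_eq_sub_of_hasDerivAt h hc]
  simp; ring

theorem exponential_conjugate_prior_assumption2 (lam : ℝ) (hlam : 0 < lam) :
    (∀ θ : ℝ, 0 < θ → ∀ x y : ℝ, 0 ≤ x → 0 ≤ y →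
      lrdist (expDensity θ x) (expDensity θ y) = θ * |x - y|) ∧
    (∀ L : ℝ, 0 < L →
      Set.Ioc (0 : ℝ) L ⊆
        {θ : ℝ | 0 < θ ∧ ∀ x y : ℝ, 0 ≤ x → 0 ≤ y →
          lrdist (expDensity θ x) (expDensity θ y) ≤ L * |x - y|}) ∧
    (∀ L : ℝ, 0 ≤ L →
      ENNReal.ofReal (1 - Real.exp (-(lam * L))) ≤
        expPrior lam
          {θ : ℝ | 0 < θ ∧ ∀ x y : ℝ, 0 ≤ x → 0 ≤ y →
            lrdist (expDensity θ x) (expDensity θ y) ≤ L * |x - y|}) := by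
  have hsubset : ∀ L : ℝ, Set.Ioc (0 : ℝ) L ⊆
      {θ : ℝ | 0 < θ ∧ ∀ x y : ℝ, 0 ≤ x → 0 ≤ y →
        lrdist (expDensity θ x) (expDensity θ y) ≤ L * |x - y|} := by
    rintro L θ ⟨hθ, hθL⟩
    refine ⟨hθ, fun x y hx hy => ?_⟩
    rw [lrdist_expDensity θ hθ x y]
    exact mul_le_mul_of_nonneg_right hθL (abs_nonneg _)
  refine ⟨fun θ hθ x y _ _ => lrdist_expDensity θ hθ x y, fun L _ => hsubset L, fun L hL => ?_⟩
  have hmono := measure_mono (μ := expPrior lam) (hsubset L)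
  refine le_trans ?_ hmono
  rw [expPrior, withDensity_apply _ measurableSet_Ioc]
  have hcongr : ∫⁻ θ in Set.Ioc (0:ℝ) L,
      (if 0 < θ then ENNReal.ofReal (lam * Real.exp (-(lam * θ))) else 0) ∂volume
      = ∫⁻ θ in Set.Ioc (0:ℝ) L, ENNReal.ofReal (lam * Real.exp (-(lam * θ))) ∂volume := by
    refine setLIntegral_congr_fun measurableSet_Ioc ?_
    intro θ hθ
    simp only [if_pos hθ.1]
  rw [hcongr, ← exp_integral_Ioc lam L hL]
  rw [MeasureTheory.ofReal_integral_eq_lintegral_ofReal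
    (((by continuity : Continuous fun θ : ℝ => lam * Real.exp (-(lam * θ))).intervalIntegrable
      0 L).1)
    (Filter.Eventually.of_forall fun θ => by positivity)]
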